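/- Let ε be a real number with ε ≥ 4√2 − 1, and let Z be a nonnegative real-valued random variable with finite second moment satisfying σ²[Z] ≤ E[Z]. If E[Z] ≥ 8·pivot(ε), then P(Z < thresh(ε)) ≤ 1/45.28. -/

import Mathlib

open MeasureTheory ProbabilityTheory

/-- `pivot ε = 9.84·(1 + 1/ε)²`. -/
noncomputable def pivot (ε : ℝ) : ℝ := 9.84 * (1 + 1 / ε) ^ 2

/-- `thresh ε = 9.84·(1 + ε/(1+ε))·(1 + 1/ε)²`. -/
noncomputable def thresh (ε : ℝ) : ℝ := 9.84 * (1 + ε / (1 + ε)) * (1 + 1 / ε) ^ 2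


lemma cantelli_aux {Ω : Type*} [MeasurableSpace Ω] (μ : Measure Ω) [IsProbabilityMeasure μ]
    (X : Ω → ℝ) (hX : MemLp X 2 μ) {l : ℝ} (hl : 0 < l) :
    (μ {ω | X ω ≤ (∫ x, X x ∂μ) - l}).toReal ≤
      variance X μ / (variance X μ + l ^ 2) := by
  set m := ∫ x, X x ∂μ with hm
  set V := variance X μ with hV
  have hV0 : 0 ≤ V := variance_nonneg X μ
  set u := V / l with hu
  have hu0 : 0 ≤ u := div_nonneg hV0 hl.le
  have hXint : Integrable X μ := hX.integrable one_le_two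
  have hXsq : Integrable (fun ω => X ω ^ 2) μ := by
    have := hX.integrable_sq
    simpa [Pi.pow_apply] using this
  have hint : Integrable (fun ω => (m + u - X ω) ^ 2) μ := by
    have h1 : Integrable (fun ω => (m + u) ^ 2 - 2 * (m + u) * X ω + X ω ^ 2) μ :=
      ((integrable_const _).sub (hXint.const_mul _)).add hXsq
    refine h1.congr (ae_of_all _ fun ω => by ring)
  have hsq : ∫ ω, X ω ^ 2 ∂μ = V + m ^ 2 := by
    have := variance_eq_sub hX
    simp only [Pi.pow_apply] at this
    rw [hV, this]; ring
  have hmean : ∫ ω, (m + u - X ω) ^ 2 ∂μ = V + u ^ 2 := by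
    have h2 : (fun ω => (m + u - X ω) ^ 2)
        = fun ω => (m + u) ^ 2 - 2 * (m + u) * X ω + X ω ^ 2 := by
      funext ω; ring
    rw [h2]
    have e1 : ∫ ω, ((m + u) ^ 2 - 2 * (m + u) * X ω + X ω ^ 2) ∂μ
        = (∫ ω, ((m + u) ^ 2 - 2 * (m + u) * X ω) ∂μ) + ∫ ω, X ω ^ 2 ∂μ :=
      integral_add ((integrable_const _).sub (hXint.const_mul _)) hXsq
    have e2 : ∫ ω, ((m + u) ^ 2 - 2 * (m + u) * X ω) ∂μ
        = (∫ _ω, ((m + u) ^ 2 : ℝ) ∂μ) - ∫ ω, 2 * (m + u) * X ω ∂μ :=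
      integral_sub (integrable_const _) (hXint.const_mul _)
    rw [e1, e2, integral_const, integral_const_mul, hsq]
    simp only [probReal_univ, measure_univ, ENNReal.toReal_one, smul_eq_mul, one_mul, ← hm]
    ring
  have hsubset : {ω | X ω ≤ m - l} ⊆ {ω | (l + u) ^ 2 ≤ (m + u - X ω) ^ 2} := by
    intro ω hω
    simp only [Set.mem_setOf_eq] at hω ⊢
    have h3 : l + u ≤ m + u - X ω := by linarith
    exact pow_le_pow_left₀ (by linarith) h3 2
  have hmarkov := mul_meas_ge_le_integral_of_nonneg
    (ae_of_all μ fun ω => sq_nonneg (m + u - X ω)) hint ((l + u) ^ 2)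
  rw [hmean] at hmarkov
  have hmono : (μ {ω | X ω ≤ m - l}).toReal
      ≤ (μ {ω | (l + u) ^ 2 ≤ (m + u - X ω) ^ 2}).toReal :=
    ENNReal.toReal_mono (measure_ne_top μ _) (measure_mono hsubset)
  have hlu : (0:ℝ) < (l + u) ^ 2 := by positivity
  have hkey : (μ {ω | X ω ≤ m - l}).toReal ≤ (V + u ^ 2) / (l + u) ^ 2 := by
    rw [le_div_iff₀ hlu]
    calc (μ {ω | X ω ≤ m - l}).toReal * (l + u) ^ 2
        ≤ (μ {ω | (l + u) ^ 2 ≤ (m + u - X ω) ^ 2}).toReal * (l + u) ^ 2 := by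
          exact mul_le_mul_of_nonneg_right hmono hlu.le
      _ ≤ V + u ^ 2 := by rw [mul_comm]; exact hmarkov
  refine hkey.trans_eq ?_
  rw [hu, div_eq_div_iff (by positivity) (by positivity)]
  field_simp
  ring

theorem stmt_19 {Ω : Type*} [MeasurableSpace Ω] (μ : Measure Ω) [IsProbabilityMeasure μ]
    (ε : ℝ) (hlo : 4 * Real.sqrt 2 - 1 ≤ ε)
    (Z : Ω → ℝ) (hZnonneg : ∀ ω, 0 ≤ Z ω) (hL2 : MemLp Z 2 μ)
    (hvar : variance Z μ ≤ ∫ x, Z x ∂μ)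
    (hE : 8 * pivot ε ≤ ∫ x, Z x ∂μ) :
    (μ {ω | Z ω < thresh ε}).toReal ≤ 1 / 45.28 := by
  have hs2 : (1:ℝ) ≤ Real.sqrt 2 := by
    rw [show (1:ℝ) = Real.sqrt 1 by simp]
    exact Real.sqrt_le_sqrt (by norm_num)
  have hε : (0:ℝ) < ε := by linarith
  set m := ∫ x, Z x ∂μ with hm
  set V := variance Z μ with hV
  have hV0 : 0 ≤ V := variance_nonneg Z μ
  have hεinv : (0:ℝ) < 1 / ε := by positivity
  have hp : (9.84:ℝ) ≤ pivot ε := by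
    unfold pivot; nlinarith [sq_nonneg (1 / ε)]
  have hc : ε / (1 + ε) < 1 := by
    rw [div_lt_one (by linarith)]; linarith
  have ht2p : thresh ε ≤ 2 * pivot ε := by
    unfold thresh pivot
    have hq2 : (0:ℝ) ≤ (1 + 1 / ε) ^ 2 := sq_nonneg _
    nlinarith
  have hm78 : (78.72:ℝ) ≤ m := by nlinarith
  have ht : thresh ε ≤ m / 4 := by linarith
  set l := m - thresh ε with hl
  have hl34 : 3 * m / 4 ≤ l := by simp only [hl]; linarith
  have hlpos : 0 < l := by linarith
  have hsub : {ω | Z ω < thresh ε} ⊆ {ω | Z ω ≤ m - l} := by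
    intro ω hω
    simp only [Set.mem_setOf_eq] at hω ⊢
    simp only [hl]; linarith
  have h1 := cantelli_aux μ Z hL2 hlpos
  calc (μ {ω | Z ω < thresh ε}).toReal
      ≤ (μ {ω | Z ω ≤ m - l}).toReal :=
        ENNReal.toReal_mono (measure_ne_top μ _) (measure_mono hsub)
    _ ≤ V / (V + l ^ 2) := h1
    _ ≤ 1 / 45.28 := by
        rw [div_le_div_iff₀ (by positivity) (by norm_num)]
        nlinarith [mul_le_mul hl34 hl34 (by linarith) (le_trans (by linarith) hl34),
          mul_le_mul_of_nonneg_left hm78 (show (0:ℝ) ≤ m by linarith)]
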